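/- Let (W,S) be a finite Coxeter system with long element w₀ and u, v ∈ W. If u ∨_R v = w₀ (join in the right weak order), then N(u ∨_R v) = ⟨N(u) ∪ N(v)⟩. -/

import Mathlib

/- Common definitions: reflections, inversion sets, Bruhat graph paths, Bruhat preclosure,
   twisted inversion sets, twisted lengths, twisted Bruhat graph/order, reflection orders,
   initial sections, and the right weak order, for a Coxeter system `cs`. -/

namespace CoxeterSystem

variable {B : Type*} {W : Type*} [Group W] {M : CoxeterMatrix B}
variable (cs : CoxeterSystem M W)

/-- The set of reflections `T`. -/
def reflSet : Set W := {t | cs.IsReflection t}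

/-- The inversion set `N(w) = {t ∈ T : ℓ(tw) < ℓ(w)}`. -/
def invSet (w : W) : Set W :=
  {t | cs.IsReflection t ∧ cs.length (t * w) < cs.length w}

/-- One step in the Bruhat graph using only edges labelled (on the right) by elements of `A`:
`u → u * t` with `t ∈ A` a reflection and `ℓ(u) < ℓ(u * t)`. -/
def AStep (A : Set W) (u v : W) : Prop :=
  ∃ t ∈ A, cs.IsReflection t ∧ v = u * t ∧ cs.length u < cs.length v

/-- The (right) Bruhat preclosure `⟨A⟩`: reflections reachable from the identity by a path in the
Bruhat graph all of whose edge labels lie in `A`. -/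
def bclosure (A : Set W) : Set W :=
  {t | cs.IsReflection t ∧ Relation.ReflTransGen (cs.AStep A) 1 t}

/-- The twisted inversion set `w · A = N(w) △ w A w⁻¹`. -/
def twisted (w : W) (A : Set W) : Set W :=
  symmDiff (cs.invSet w) ((fun x => w * x * w⁻¹) '' A)

/-- The twisted length `ℓ_A(v, w) = ℓ(w v⁻¹) - 2 |N(v w⁻¹) ∩ v · A|`. -/
noncomputable def tlen (A : Set W) (v w : W) : ℤ :=
  (cs.length (w * v⁻¹) : ℤ) - 2 * ((cs.invSet (v * w⁻¹)) ∩ cs.twisted v A).ncard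

/-- The one-argument twisted length `ℓ_A(w) = ℓ_A(e, w) = ℓ(w) - 2 |N(w⁻¹) ∩ A|`. -/
noncomputable def tlen₀ (A : Set W) (w : W) : ℤ :=
  (cs.length w : ℤ) - 2 * ((cs.invSet w⁻¹) ∩ A).ncard

/-- An edge of the twisted Bruhat graph `Ω_{(W,A)}`: Bruhat graph edges with labels not in `A`,
and reversed Bruhat graph edges with labels in `A`. -/
def TwEdge (A : Set W) (u v : W) : Prop :=
  (∃ t, cs.IsReflection t ∧ t ∉ A ∧ v = u * t ∧ cs.length u < cs.length v) ∨
  (∃ t, cs.IsReflection t ∧ t ∈ A ∧ u = v * t ∧ cs.length v < cs.length u)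

/-- The twisted Bruhat order `u ≤_A v`: reachability in the twisted Bruhat graph. -/
def tle (A : Set W) (u v : W) : Prop := Relation.ReflTransGen (cs.TwEdge A) u v

/-- A reflection subgroup: a subgroup generated by the reflections it contains. -/
def IsReflectionSubgroup (W' : Subgroup W) : Prop :=
  W' = Subgroup.closure ((W' : Set W) ∩ cs.reflSet)

/-- The canonical generators `χ(W') = {t ∈ T : N(t) ∩ W' = {t}}` of a reflection subgroup. -/
def chi (W' : Subgroup W) : Set W :=
  {t | cs.IsReflection t ∧ cs.invSet t ∩ (W' : Set W) = {t}}

/-- A reflection order: a strict total order on the set of reflections such that for every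
dihedral reflection subgroup `W'` with canonical generators `{r, s}`, `r ≠ s`, if `r ≺ s` then
every reflection of `W'` lies (weakly) between `r` and `s`.  (This betweenness condition for
*all* dihedral reflection subgroups is equivalent to the alternating-chain condition
`r ≺ rsr ≺ ⋯ ≺ srs ≺ s`.) -/
def IsReflectionOrder (lt : W → W → Prop) : Prop :=
  (∀ t ∈ cs.reflSet, ¬ lt t t) ∧
  (∀ t₁ ∈ cs.reflSet, ∀ t₂ ∈ cs.reflSet, ∀ t₃ ∈ cs.reflSet,
      lt t₁ t₂ → lt t₂ t₃ → lt t₁ t₃) ∧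
  (∀ t₁ ∈ cs.reflSet, ∀ t₂ ∈ cs.reflSet, t₁ = t₂ ∨ lt t₁ t₂ ∨ lt t₂ t₁) ∧
  (∀ W' : Subgroup W, cs.IsReflectionSubgroup W' →
    ∀ r s : W, cs.chi W' = {r, s} → r ≠ s → lt r s →
      ∀ t ∈ (W' : Set W) ∩ cs.reflSet, (t = r ∨ lt r t) ∧ (t = s ∨ lt t s))

/-- `A` is an initial section of some reflection order. -/
def IsInitialSection (A : Set W) : Prop :=
  A ⊆ cs.reflSet ∧ ∃ lt : W → W → Prop, cs.IsReflectionOrder lt ∧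
    ∀ a ∈ A, ∀ b ∈ cs.reflSet \ A, lt a b

/-- The right weak order, characterized by containment of inversion sets. -/
def wle (u v : W) : Prop := cs.invSet u ⊆ cs.invSet v

/-- `j` is the join `u ∨_R v` in the right weak order. -/
def IsJoin (u v j : W) : Prop :=
  cs.wle u j ∧ cs.wle v j ∧ ∀ z : W, cs.wle u z → cs.wle v z → cs.wle j z

/-- The Bruhat preclosure computed inside a subgroup `H` of `W` (for a standard parabolic
subgroup `H = W_I`, the length function and the reflections of `W_I` are the restrictions of
those of `W`, so this is the Bruhat preclosure of the Coxeter system `(W_I, I)`). -/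
def bclosureIn (H : Subgroup W) (A : Set W) : Set W :=
  {t | cs.IsReflection t ∧ t ∈ H ∧
    Relation.ReflTransGen (fun u v => u ∈ H ∧ v ∈ H ∧ cs.AStep A u v) 1 t}

end CoxeterSystem

/-! ### Auxiliary development: the reflection parity cocycle -/

namespace JoinW0Aux

open CoxeterSystem List

attribute [local instance] Classical.propDecidable

variable {B : Type*} {W : Type*} [Group W] {M : CoxeterMatrix B}
variable (cs : CoxeterSystem M W)

local prefix:100 "s" => cs.simple
local prefix:100 "π" => cs.wordProd
local prefix:100 "ℓ" => cs.length

/-- Parity of the number of occurrences of `t` in a list. -/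
noncomputable def cnt (t : W) : List W → Bool
  | [] => false
  | a :: l => xor (decide (t = a)) (cnt t l)

lemma cnt_nil (t : W) : cnt (W := W) t [] = false := rfl

lemma cnt_cons (t a : W) (l : List W) :
    cnt t (a :: l) = xor (decide (t = a)) (cnt t l) := rfl

lemma cnt_append (t : W) (l l' : List W) :
    cnt t (l ++ l') = xor (cnt t l) (cnt t l') := by
  induction l with
  | nil => simp [cnt_nil, cnt_cons]
  | cons a l ih =>
    rw [List.cons_append, cnt_cons, cnt_cons, ih, Bool.xor_assoc]

lemma mem_of_cnt_true {t : W} {l : List W} (h : cnt t l = true) : t ∈ l := by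
  induction l with
  | nil => simp [cnt_nil] at h
  | cons a l ih =>
    rw [cnt_cons] at h
    by_cases hta : t = a
    · rw [hta]; exact List.mem_cons_self
    · simp only [hta, decide_false, Bool.false_xor] at h
      exact List.mem_cons_of_mem a (ih h)

private lemma conj_eq_iff' (u x y : W) : u * x * u⁻¹ = y ↔ x = u⁻¹ * y * u := by
  constructor
  · rintro rfl; group
  · rintro rfl; group

private lemma invol_conj_eq_iff {c : W} (hc : c * c = 1) (x y : W) :
    c * x * c = y ↔ x = c * y * c := by
  constructor
  · intro h
    rw [← h, show c * (c * x * c) * c = (c * c) * x * (c * c) by group, hc, one_mul, mul_one]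
  · intro h
    rw [h, show c * (c * y * c) * c = (c * c) * y * (c * c) by group, hc, one_mul, mul_one]

private lemma conj_simple_eq_simple_iff (i : B) (t : W) :
    s i * t * s i = s i ↔ t = s i := by
  rw [invol_conj_eq_iff (cs.simple_mul_simple_self i)]
  have : s i * s i * s i = s i := by
    rw [cs.simple_mul_simple_self, one_mul]
  rw [this]

/-- The permutation of `W × Bool` associated to a simple reflection. -/
noncomputable def sig (i : B) : Equiv.Perm (W × Bool) :=
  Function.Involutive.toPerm
    (fun p => (s i * p.1 * s i, xor (decide (p.1 = s i)) p.2))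
    (by
      rintro ⟨t, b⟩
      simp only [Prod.mk.injEq]
      constructor
      · rw [show s i * (s i * t * s i) * s i = (s i * s i) * t * (s i * s i) by group,
          cs.simple_mul_simple_self, one_mul, mul_one]
      · rw [show (decide (s i * t * s i = s i)) = decide (t = s i) from
          decide_eq_decide.mpr (conj_simple_eq_simple_iff cs i t)]
        exact (by decide : ∀ (x y : Bool), xor x (xor x y) = y) _ b)

lemma sig_apply (i : B) (t : W) (b : Bool) :
    sig cs i (t, b) = (s i * t * s i, xor (decide (t = s i)) b) := rfl

private lemma simple_shift (i j : B) (m : ℕ) :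
    s j * (s i * s j) ^ m = (s j * s i) ^ m * s j := by
  induction m with
  | zero => simp
  | succ m ih =>
    rw [pow_succ, ← mul_assoc, ih, pow_succ]
    group

private lemma inv_pow_simple (i j : B) (m : ℕ) :
    ((s i * s j) ^ m)⁻¹ = (s j * s i) ^ m := by
  rw [← inv_pow]
  congr 1
  rw [mul_inv_rev, cs.inv_simple, cs.inv_simple]

lemma sig_mul_pow (i j : B) (m : ℕ) (t : W) (b : Bool) :
    ((sig cs i * sig cs j) ^ m) (t, b) =
      ((s i * s j) ^ m * t * ((s i * s j) ^ m)⁻¹,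
        xor (cnt t ((List.range (2 * m)).map (fun n => (s j * s i) ^ n * s j))) b) := by
  induction m with
  | zero => simp [cnt_nil]
  | succ m ih =>
    rw [pow_succ', Equiv.Perm.mul_apply, ih, Equiv.Perm.mul_apply, sig_apply, sig_apply]
    have huinv : ((s i * s j) ^ m)⁻¹ = (s j * s i) ^ m := inv_pow_simple cs i j m
    have key1 : ((s i * s j) ^ m * t * ((s i * s j) ^ m)⁻¹ = s j)
        ↔ t = (s j * s i) ^ (2 * m) * s j := by
      rw [conj_eq_iff']
      have : ((s i * s j) ^ m)⁻¹ * s j * (s i * s j) ^ m = (s j * s i) ^ (2 * m) * s j := by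
        rw [huinv, mul_assoc, simple_shift, ← mul_assoc, ← pow_add, two_mul]
      rw [this]
    have key2 : (s j * ((s i * s j) ^ m * t * ((s i * s j) ^ m)⁻¹) * s j = s i)
        ↔ t = (s j * s i) ^ (2 * m + 1) * s j := by
      rw [invol_conj_eq_iff (cs.simple_mul_simple_self j), conj_eq_iff']
      have : ((s i * s j) ^ m)⁻¹ * (s j * s i * s j) * (s i * s j) ^ m
          = (s j * s i) ^ (2 * m + 1) * s j := by
        rw [huinv]
        calc (s j * s i) ^ m * (s j * s i * s j) * (s i * s j) ^ m
            = (s j * s i) ^ m * (s j * s i) * (s j * (s i * s j) ^ m) := by group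
          _ = (s j * s i) ^ m * (s j * s i) * ((s j * s i) ^ m * s j) := by rw [simple_shift]
          _ = ((s j * s i) ^ m * (s j * s i) ^ 1 * (s j * s i) ^ m) * s j := by
                rw [pow_one]; group
          _ = (s j * s i) ^ (m + 1 + m) * s j := by rw [← pow_add, ← pow_add]
          _ = (s j * s i) ^ (2 * m + 1) * s j := by ring_nf
      rw [this]
    have hconj : s i * (s j * ((s i * s j) ^ m * t * ((s i * s j) ^ m)⁻¹) * s j) * s i
        = (s i * s j) ^ (m + 1) * t * ((s i * s j) ^ (m + 1))⁻¹ := by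
      rw [inv_pow_simple cs i j (m + 1), inv_pow_simple cs i j m,
        pow_succ' (s i * s j) m, pow_succ (s j * s i) m]
      group
    have hlist : cnt t ((List.range (2 * (m + 1))).map (fun n => (s j * s i) ^ n * s j))
        = xor (decide (t = (s j * s i) ^ (2 * m + 1) * s j))
            (xor (decide (t = (s j * s i) ^ (2 * m) * s j))
              (cnt t ((List.range (2 * m)).map (fun n => (s j * s i) ^ n * s j)))) := by
      have h2m : 2 * (m + 1) = (2 * m + 1) + 1 := by ring
      rw [h2m, List.range_succ, List.range_succ, List.map_append, List.map_append,
        cnt_append, cnt_append]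
      simp only [List.map_cons, List.map_nil, cnt_cons, cnt_nil]
      cases hx : decide (t = (s j * s i) ^ (2 * m + 1) * s j) <;>
        cases hy : decide (t = (s j * s i) ^ (2 * m) * s j) <;>
        cases hz : cnt t ((List.range (2 * m)).map (fun n => (s j * s i) ^ n * s j)) <;> rfl
    rw [Prod.mk.injEq]
    constructor
    · exact hconj
    · rw [hlist,
        show (decide ((s i * s j) ^ m * t * ((s i * s j) ^ m)⁻¹ = s j))
            = decide (t = (s j * s i) ^ (2 * m) * s j) from decide_eq_decide.mpr key1,
        show (decide (s j * ((s i * s j) ^ m * t * ((s i * s j) ^ m)⁻¹) * s j = s i))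
            = decide (t = (s j * s i) ^ (2 * m + 1) * s j) from decide_eq_decide.mpr key2]
      cases decide (t = (s j * s i) ^ (2 * m + 1) * s j) <;>
        cases decide (t = (s j * s i) ^ (2 * m) * s j) <;>
        cases cnt t ((List.range (2 * m)).map (fun n => (s j * s i) ^ n * s j)) <;>
        cases b <;> rfl

lemma liftable : M.IsLiftable (sig cs) := by
  intro i j
  apply Equiv.ext
  rintro ⟨t, b⟩
  rw [sig_mul_pow, cs.simple_mul_simple_pow i j]
  have hl : (List.range (2 * M i j)).map (fun n => (s j * s i) ^ n * s j)
      = ((List.range (M i j)).map (fun n => (s j * s i) ^ n * s j))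
        ++ ((List.range (M i j)).map (fun n => (s j * s i) ^ n * s j)) := by
    rw [two_mul, List.range_add, List.map_append, List.map_map]
    congr 1
    apply List.map_congr_left
    intro n _
    show (s j * s i) ^ (M i j + n) * s j = (s j * s i) ^ n * s j
    rw [pow_add, cs.simple_mul_simple_pow' i j, one_mul]
  rw [hl, cnt_append]
  simp [Equiv.Perm.one_apply]

end JoinW0Aux

namespace JoinW0Aux

open CoxeterSystem List

attribute [local instance] Classical.propDecidable

variable {B : Type*} {W : Type*} [Group W] {M : CoxeterMatrix B}
variable (cs : CoxeterSystem M W)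

local prefix:100 "s" => cs.simple
local prefix:100 "π" => cs.wordProd
local prefix:100 "ℓ" => cs.length

/-- The parity homomorphism. -/
noncomputable def theta : W →* Equiv.Perm (W × Bool) := cs.lift ⟨sig cs, liftable cs⟩

lemma theta_simple (i : B) : theta cs (s i) = sig cs i := cs.lift_apply_simple (liftable cs) i

/-- The parity cocycle. -/
noncomputable def ff (w t : W) : Bool := ((theta cs w) (t, false)).2

lemma theta_apply (w t : W) (b : Bool) :
    theta cs w (t, b) = (w * t * w⁻¹, xor (ff cs w t) b) := by
  induction w using cs.simple_induction_left generalizing t b with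
  | one =>
    simp only [map_one, Equiv.Perm.one_apply, ff, one_mul, inv_one, mul_one]
    cases b <;> rfl
  | mul_simple_left w i ih =>
    have h1 : theta cs (s i * w) (t, b) = sig cs i (theta cs w (t, b)) := by
      rw [map_mul, theta_simple, Equiv.Perm.mul_apply]
    have h2 : theta cs (s i * w) (t, false) = sig cs i (theta cs w (t, false)) := by
      rw [map_mul, theta_simple, Equiv.Perm.mul_apply]
    rw [h1, ih t b, sig_apply]
    have hff : ff cs (s i * w) t = xor (decide (w * t * w⁻¹ = s i)) (ff cs w t) := by
      show (theta cs (s i * w) (t, false)).2 = _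
      rw [h2, ih t false, sig_apply]
      simp
    rw [hff, Prod.mk.injEq]
    refine ⟨?_, by rw [Bool.xor_assoc]⟩
    rw [mul_inv_rev, cs.inv_simple]
    group

lemma ff_one (t : W) : ff cs 1 t = false := by
  simp [ff, map_one]

lemma ff_mul (x y t : W) :
    ff cs (x * y) t = xor (ff cs x (y * t * y⁻¹)) (ff cs y t) := by
  show ((theta cs (x * y)) (t, false)).2 = _
  rw [map_mul, Equiv.Perm.mul_apply, theta_apply, theta_apply]
  simp

lemma ff_simple (i : B) (t : W) : ff cs (s i) t = decide (t = s i) := by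
  show ((theta cs (s i)) (t, false)).2 = _
  rw [theta_simple, sig_apply]
  simp

lemma ff_wordProd (ω : List B) (t : W) :
    ff cs (π ω) t = cnt t (cs.rightInvSeq ω) := by
  induction ω generalizing t with
  | nil => simp [cs.wordProd_nil, ff_one, cnt_nil]
  | cons i ω ih =>
    rw [cs.wordProd_cons, ff_mul, ff_simple, ih,
      show cs.rightInvSeq (i :: ω) = ((π ω)⁻¹ * s i * π ω) :: cs.rightInvSeq ω from rfl,
      cnt_cons]
    have : decide (π ω * t * (π ω)⁻¹ = s i) = decide (t = (π ω)⁻¹ * s i * π ω) := by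
      apply decide_eq_decide.mpr
      rw [conj_eq_iff']
    rw [this, Bool.xor_comm]

lemma lt_of_ff_true {w t : W} (ht : cs.IsReflection t) (h : ff cs w t = true) :
    ℓ (w * t) < ℓ w := by
  obtain ⟨ω, hred, rfl⟩ := cs.exists_reduced_word' w
  rw [ff_wordProd] at h
  have hmem : t ∈ cs.rightInvSeq ω := mem_of_cnt_true h
  exact (cs.isRightInversion_of_mem_rightInvSeq hred hmem).2

lemma ff_self {t : W} (ht : cs.IsReflection t) : ff cs t t = true := by
  obtain ⟨w, i, rfl⟩ := ht
  have h1 : ff cs (w * s i * w⁻¹) (w * s i * w⁻¹)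
      = xor (ff cs (w * s i) (s i)) (ff cs w⁻¹ (w * s i * w⁻¹)) := by
    rw [show w * s i * w⁻¹ = (w * s i) * w⁻¹ by group, ff_mul]
    congr 2
    group
  have h2 : ff cs (w * s i) (s i) = xor (ff cs w (s i)) true := by
    rw [ff_mul]
    congr 1
    · congr 1
      rw [cs.inv_simple]
      rw [show s i * s i * s i = (s i * s i) * s i by rfl, cs.simple_mul_simple_self, one_mul]
    · rw [ff_simple]; simp
  have h3 : ff cs w⁻¹ (w * s i * w⁻¹) = ff cs w (s i) := by
    have h4 : ff cs (w⁻¹ * w) (s i) = xor (ff cs w⁻¹ (w * s i * w⁻¹)) (ff cs w (s i)) :=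
      ff_mul cs w⁻¹ w (s i)
    rw [inv_mul_cancel, ff_one] at h4
    cases hx : ff cs w⁻¹ (w * s i * w⁻¹) <;> cases hy : ff cs w (s i) <;>
      rw [hx, hy] at h4 <;> first | rfl | exact absurd h4 (by decide) | exact h4.symm
  rw [h1, h2, h3]
  cases ff cs w (s i) <;> rfl

lemma ff_iff {t : W} (ht : cs.IsReflection t) (w : W) :
    ff cs w t = true ↔ ℓ (w * t) < ℓ w := by
  constructor
  · exact lt_of_ff_true cs ht
  · intro hlt
    have hw : w = (w * t) * t := by
      rw [mul_assoc, ht.mul_self, mul_one]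
    have h1 : ff cs ((w * t) * t) t = xor (ff cs (w * t) t) true := by
      rw [ff_mul]
      congr 1
      · congr 1
        rw [ht.inv, show t * t * t = (t * t) * t by rfl, ht.mul_self, one_mul]
      · exact ff_self cs ht
    have h2 : ff cs (w * t) t = false := by
      cases hx : ff cs (w * t) t
      · rfl
      · exfalso
        have := lt_of_ff_true cs ht hx
        rw [mul_assoc, ht.mul_self, mul_one] at this
        omega
    rw [hw, h1, h2]
    rfl

/-- Left-inversion version. -/
lemma ff_left_iff {t : W} (ht : cs.IsReflection t) (w : W) :
    ff cs w⁻¹ t = true ↔ ℓ (t * w) < ℓ w := by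
  rw [ff_iff cs ht w⁻¹]
  constructor
  · intro h
    have h2 : ℓ ((w⁻¹ * t)⁻¹) < ℓ (w⁻¹) := by rwa [cs.length_inv]
    rw [mul_inv_rev, ht.inv, inv_inv, cs.length_inv] at h2
    exact h2
  · intro h
    have h2 : ℓ ((t * w)⁻¹) < ℓ ((w)⁻¹) := by
      rw [cs.length_inv, cs.length_inv]
      exact h
    rwa [mul_inv_rev, ht.inv] at h2

end JoinW0Aux


open CoxeterSystem in
/-- In a finite Coxeter system, if `u ∨_R v = w₀` (the long element), then
`N(u ∨_R v) = ⟨N(u) ∪ N(v)⟩`. -/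
theorem invSet_join_eq_bclosure_of_join_eq_longest
    {B : Type*} {W : Type*} [Group W] {M : CoxeterMatrix B} (cs : CoxeterSystem M W)
    [Finite W] (w₀ : W) (hw₀ : ∀ x : W, cs.length x ≤ cs.length w₀)
    (u v : W) (hjoin : cs.IsJoin u v w₀) :
    cs.invSet w₀ = cs.bclosure (cs.invSet u ∪ cs.invSet v) := by
  set A : Set W := cs.invSet u ∪ cs.invSet v with hA
  have hArefl : ∀ a ∈ A, cs.IsReflection a := by
    intro a ha
    rcases ha with ha | ha <;> exact ha.1
  have hreflw₀ : ∀ t : W, cs.IsReflection t → t ∈ cs.invSet w₀ := by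
    intro t ht
    exact ⟨ht, lt_of_le_of_ne (hw₀ (t * w₀)) (ht.length_mul_right_ne w₀)⟩
  have hffw₀ : ∀ t : W, cs.IsReflection t → JoinW0Aux.ff cs w₀⁻¹ t = true := by
    intro t ht
    rw [JoinW0Aux.ff_left_iff cs ht w₀]
    exact (hreflw₀ t ht).2
  have reach : ∀ x : W, Relation.ReflTransGen (cs.AStep A) 1 x := by
    have main : ∀ n : ℕ, ∀ x : W, cs.length x ≤ n →
        Relation.ReflTransGen (cs.AStep A) 1 x := by
      intro n
      induction n with
      | zero =>
        intro x hx
        have hx1 : x = 1 := cs.length_eq_zero_iff.mp (Nat.le_zero.mp hx)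
        exact hx1 ▸ Relation.ReflTransGen.refl
      | succ n ih =>
        intro x hx
        by_cases hx1 : x = 1
        · exact hx1 ▸ Relation.ReflTransGen.refl
        · have hex : ∃ a ∈ A, cs.length (x * a) < cs.length x := by
            by_contra hcon
            push_neg at hcon
            have hAz : ∀ a ∈ A, a ∈ cs.invSet (x⁻¹ * w₀) := by
              intro a ha
              have haR := hArefl a ha
              refine ⟨haR, ?_⟩
              rw [← JoinW0Aux.ff_left_iff cs haR (x⁻¹ * w₀)]
              have hinv : (x⁻¹ * w₀)⁻¹ = w₀⁻¹ * x := by rw [mul_inv_rev, inv_inv]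
              rw [hinv, JoinW0Aux.ff_mul]
              have h1 : JoinW0Aux.ff cs w₀⁻¹ (x * a * x⁻¹) = true :=
                hffw₀ _ (haR.conj x)
              have h2 : JoinW0Aux.ff cs x a = false := by
                cases hz : JoinW0Aux.ff cs x a
                · rfl
                · exfalso
                  have h3 := (JoinW0Aux.ff_iff cs haR x).mp hz
                  have h4 := hcon a ha
                  omega
              rw [h1, h2]
              rfl
            have hub : cs.invSet w₀ ⊆ cs.invSet (x⁻¹ * w₀) :=
              hjoin.2.2 (x⁻¹ * w₀) (fun a ha => hAz a (Set.mem_union_left _ ha))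
                (fun a ha => hAz a (Set.mem_union_right _ ha))
            have hx1' : x⁻¹ ≠ 1 := fun h => hx1 (by rwa [inv_eq_one] at h)
            obtain ⟨i, hi⟩ := cs.exists_leftDescent_of_ne_one hx1'
            have hsi : cs.simple i ∈ cs.invSet (x⁻¹ * w₀) :=
              hub (hreflw₀ _ (cs.isReflection_simple i))
            have hff : JoinW0Aux.ff cs (w₀⁻¹ * x) (cs.simple i) = true := by
              have h5 := hsi.2
              rw [← JoinW0Aux.ff_left_iff cs (cs.isReflection_simple i) (x⁻¹ * w₀)] at h5
              rwa [mul_inv_rev, inv_inv] at h5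
            rw [JoinW0Aux.ff_mul] at hff
            have h1 : JoinW0Aux.ff cs w₀⁻¹ (x * cs.simple i * x⁻¹) = true :=
              hffw₀ _ ((cs.isReflection_simple i).conj x)
            have h2 : JoinW0Aux.ff cs x (cs.simple i) = true := by
              rw [JoinW0Aux.ff_iff cs (cs.isReflection_simple i) x]
              have h3 : cs.length ((x * cs.simple i)⁻¹) < cs.length (x⁻¹) := by
                rw [mul_inv_rev, cs.inv_simple]
                exact hi
              rwa [cs.length_inv, cs.length_inv] at h3
            rw [h1, h2] at hff
            exact absurd hff (by decide)
          obtain ⟨a, haA, hlt⟩ := hex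
          have haR := hArefl a haA
          have hstep : cs.AStep A (x * a) x :=
            ⟨a, haA, haR, by rw [mul_assoc, haR.mul_self, mul_one], hlt⟩
          exact (ih (x * a) (by omega)).tail hstep
    intro x
    exact main (cs.length x) x le_rfl
  ext t
  simp only [CoxeterSystem.invSet, CoxeterSystem.bclosure, Set.mem_setOf_eq]
  constructor
  · rintro ⟨ht, _⟩
    exact ⟨ht, reach t⟩
  · rintro ⟨ht, _⟩
    exact hreflw₀ t ht
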